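/- For all x > 0, the function L(x) = 2Φ(x)² − 3x·Φ(x)·φ(x) − 2φ(x)² is strictly positive; in particular L(0) = 1/2 − 1/π > 0 and L'(x) = Φ(x)φ(x) + 3x²Φ(x)φ(x) + xφ(x)² > 0 for x ≥ 0. -/

import Mathlib

open MeasureTheory ProbabilityTheory Real

noncomputable def stdPDF (u : ℝ) : ℝ := (Real.sqrt (2 * Real.pi))⁻¹ * Real.exp (-u ^ 2 / 2)

noncomputable def stdCDF (u : ℝ) : ℝ := ∫ t in Set.Iic u, stdPDF t

noncomputable def L (x : ℝ) : ℝ :=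
  2 * (stdCDF x) ^ 2 - 3 * x * stdCDF x * stdPDF x - 2 * (stdPDF x) ^ 2

lemma stdPDF_pos (u : ℝ) : 0 < stdPDF u := by
  have h2π : 0 < 2 * Real.pi := by positivity
  unfold stdPDF
  positivity

lemma continuous_stdPDF : Continuous stdPDF := by
  unfold stdPDF
  fun_prop

lemma integrable_stdPDF : Integrable stdPDF := by
  have h : Integrable (fun u : ℝ => (Real.sqrt (2 * Real.pi))⁻¹ * Real.exp (-(2:ℝ)⁻¹ * u ^ 2)) :=
    (integrable_exp_neg_mul_sq (by norm_num)).const_mul _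
  refine h.congr (Filter.Eventually.of_forall fun u => ?_)
  unfold stdPDF
  ring_nf

lemma hasDerivAt_stdCDF (x : ℝ) : HasDerivAt stdCDF (stdPDF x) x := by
  have hfun : stdCDF = fun y => stdCDF 0 + ∫ t in (0:ℝ)..y, stdPDF t := by
    funext y
    unfold stdCDF
    rw [← intervalIntegral.integral_Iic_sub_Iic integrable_stdPDF.integrableOn
      integrable_stdPDF.integrableOn]
    ring
  rw [hfun]
  have := intervalIntegral.integral_hasDerivAt_right
      (continuous_stdPDF.intervalIntegrable 0 x)
      (continuous_stdPDF.stronglyMeasurableAtFilter _ _)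
      continuous_stdPDF.continuousAt
  simpa using (this.const_add (stdCDF 0))

lemma hasDerivAt_stdPDF (x : ℝ) : HasDerivAt stdPDF (-x * stdPDF x) x := by
  have h1 : HasDerivAt (fun u : ℝ => -u ^ 2 / 2) (-x) x := by
    have := ((hasDerivAt_pow 2 x).neg).div_const 2
    simpa using this.congr_deriv (by ring)
  have h2 := (h1.exp).const_mul ((Real.sqrt (2 * Real.pi))⁻¹)
  unfold stdPDF
  refine h2.congr_deriv ?_
  ring

lemma stdCDF_pos (x : ℝ) : 0 < stdCDF x := by
  rw [stdCDF, setIntegral_pos_iff_support_of_nonneg_ae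
    (Filter.Eventually.of_forall fun t => (stdPDF_pos t).le)
    integrable_stdPDF.integrableOn]
  have : Function.support stdPDF = Set.univ := by
    ext t; simp [Function.mem_support, (stdPDF_pos t).ne']
  rw [this, Set.univ_inter]
  simp [Real.volume_Iic]

lemma integral_stdPDF : ∫ u, stdPDF u = 1 := by
  unfold stdPDF
  rw [MeasureTheory.integral_const_mul]
  have : ∀ u : ℝ, Real.exp (-u^2/2) = Real.exp (-(2⁻¹ : ℝ) * u ^ 2) := by
    intro u; ring_nf
  simp_rw [this]
  rw [integral_gaussian, show Real.pi / (2:ℝ)⁻¹ = 2 * Real.pi by ring]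
  exact inv_mul_cancel₀ (by positivity)

lemma stdCDF_zero : stdCDF 0 = 1 / 2 := by
  have heven : ∀ t : ℝ, stdPDF (-t) = stdPDF t := by
    intro t; unfold stdPDF; ring_nf
  have h1 : (∫ t in Set.Iic (0:ℝ), stdPDF t) = ∫ t in Set.Ioi (0:ℝ), stdPDF t := by
    rw [← neg_zero, ← integral_comp_neg_Ioi]
    simp_rw [heven]
    norm_num
  have h2 : (∫ t in Set.Iic (0:ℝ), stdPDF t) + (∫ t in Set.Ioi (0:ℝ), stdPDF t) = 1 := by
    rw [← MeasureTheory.setIntegral_union (Set.Iic_disjoint_Ioi le_rfl) measurableSet_Ioi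
      integrable_stdPDF.integrableOn integrable_stdPDF.integrableOn,
      Set.Iic_union_Ioi, Measure.restrict_univ, integral_stdPDF]
  rw [stdCDF]
  rw [h1] at h2 ⊢
  linarith

lemma hasDerivAt_L (x : ℝ) :
    HasDerivAt L (stdCDF x * stdPDF x + 3 * x ^ 2 * stdCDF x * stdPDF x
      + x * (stdPDF x) ^ 2) x := by
  have hΦ := hasDerivAt_stdCDF x
  have hφ := hasDerivAt_stdPDF x
  have h := (((hΦ.pow 2).const_mul 2).sub
      ((((hasDerivAt_id x).const_mul 3).mul hΦ).mul hφ)).sub ((hφ.pow 2).const_mul 2)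
  refine (show HasDerivAt L _ x from h).congr_deriv ?_
  simp only [id_eq, pow_one, Pi.mul_apply]
  push_cast
  ring

/-- `L(x) > 0` for `x > 0`; `L(0) = 1/2 - 1/π > 0`; and
`L'(x) = Φ(x)φ(x) + 3x²Φ(x)φ(x) + xφ(x)² > 0` for `x ≥ 0`. -/
theorem L_pos :
    (L 0 = 1 / 2 - 1 / Real.pi ∧ 0 < L 0) ∧
      (∀ x : ℝ, 0 ≤ x →
        deriv L x = stdCDF x * stdPDF x + 3 * x ^ 2 * stdCDF x * stdPDF x + x * (stdPDF x) ^ 2 ∧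
          0 < deriv L x) ∧
      ∀ x : ℝ, 0 < x → 0 < L x := by
  have hL0 : L 0 = 1 / 2 - 1 / Real.pi := by
    have hs : (Real.sqrt (2 * Real.pi))⁻¹ ^ 2 = (2 * Real.pi)⁻¹ := by
      rw [inv_pow, Real.sq_sqrt (by positivity)]
    simp only [L, stdCDF_zero, stdPDF]
    rw [show ((0:ℝ)^2 : ℝ) = 0 by ring]
    simp only [neg_zero, zero_div, Real.exp_zero, mul_one]
    rw [hs]
    field_simp
    ring
  have hL0pos : 0 < L 0 := by
    rw [hL0]
    have : (2:ℝ) < Real.pi := by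
      have := Real.pi_gt_three; linarith
    have hπ : 0 < Real.pi := by linarith
    rw [sub_pos, div_lt_div_iff₀ hπ (by norm_num)]
    linarith
  have hderiv : ∀ x : ℝ, deriv L x =
      stdCDF x * stdPDF x + 3 * x ^ 2 * stdCDF x * stdPDF x + x * (stdPDF x) ^ 2 :=
    fun x => (hasDerivAt_L x).deriv
  have hderivpos : ∀ x : ℝ, 0 ≤ x → 0 < deriv L x := by
    intro x hx
    rw [hderiv x]
    have h1 := stdCDF_pos x
    have h2 := stdPDF_pos x
    have : 0 < stdCDF x * stdPDF x := by positivity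
    nlinarith [sq_nonneg x, sq_nonneg (stdPDF x)]
  refine ⟨⟨hL0, hL0pos⟩, fun x hx => ⟨hderiv x, hderivpos x hx⟩, fun x hx => ?_⟩
  have hmono : StrictMonoOn L (Set.Ici 0) := by
    apply strictMonoOn_of_deriv_pos (convex_Ici 0)
    · exact fun y _ => (hasDerivAt_L y).differentiableAt.continuousAt.continuousWithinAt
    · intro y hy
      rw [interior_Ici] at hy
      exact hderivpos y hy.le
  have := hmono (Set.self_mem_Ici) (Set.mem_Ici.mpr hx.le) hx
  linarith
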